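/- Let α : X → 𝒫(Σ_τ × X) be a labelled transition system with transitions x →^σ x' iff (σ,x') ∈ α(x), and define α^* : X → 𝒫(Σ_τ × X) by α^*(x) := {(σ,y) | σ ∈ Σ_τ, x ⟹^σ y}. Then, with respect to the LTS Kleisli composition · and the pointwise inclusion order: (i) e_X ≤ α^*; (ii) α ≤ α^*; (iii) α^*·α^* ≤ α^*; (iv) α^* ≤ β for every β : X → 𝒫(Σ_τ × X) with e_X ≤ β, α ≤ β and β·β ≤ β; and (v) for every function f : X → Y and every β : Y → 𝒫(Σ_τ × Y), writing f♯(x) := {(τ, f(x))}, if f♯·α ≤ β·f♯ then f♯·α^* ≤ β^*·f♯, and if f♯·α ≥ β·f♯ then f♯·α^* ≥ β^*·f♯. -/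
import Mathlib


-- Labels: `none` is the silent label τ, `some a` is a visible letter of Σ.

/-- Kleisli composition for the LTS monad `𝒫(Σ_τ × Id)`. -/
def kcomp {A X Y Z : Type*} (g : Y → Set (Option A × Z)) (f : X → Set (Option A × Y)) :
    X → Set (Option A × Z) :=
  fun x => {p | ∃ y, ((p.1, y) ∈ f x ∧ ((none : Option A), p.2) ∈ g y) ∨
                     (((none : Option A), y) ∈ f x ∧ (p.1, p.2) ∈ g y)}

/-- The unit of the LTS monad: `e_X(x) = {(τ,x)}`. -/
def kunit {A : Type*} (X : Type*) : X → Set (Option A × X) :=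
  fun x => {((none : Option A), x)}

/-- The pointwise inclusion order on Kleisli maps. -/
def leK {A X Y : Type*} (f g : X → Set (Option A × Y)) : Prop := ∀ x, f x ⊆ g x

/-- `f♯(x) = {(τ, f x)}`. -/
def fsharp {A X Y : Type*} (f : X → Y) : X → Set (Option A × Y) :=
  fun x => {((none : Option A), f x)}

/-- Saturated transition `⟹^σ` of the LTS with transitions `x →^σ x'` iff `(σ,x') ∈ α x`. -/
def WTr {X A : Type*} (α : X → Set (Option A × X)) : Option A → X → X → Prop
  | none => Relation.ReflTransGen (fun x y => ((none : Option A), y) ∈ α x)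
  | some a => fun x y => ∃ u v, Relation.ReflTransGen (fun x y => ((none : Option A), y) ∈ α x) x u ∧
      (some a, v) ∈ α u ∧ Relation.ReflTransGen (fun x y => ((none : Option A), y) ∈ α x) v y

/-- The saturation `α*` of an LTS coalgebra: `α*(x) = {(σ,y) | x ⟹^σ y}`. -/
def sat {X A : Type*} (α : X → Set (Option A × X)) : X → Set (Option A × X) :=
  fun x => {p | WTr α p.1 x p.2}


section Aux
variable {X A Y : Type*}

private lemma wtr_tau_trans {α : X → Set (Option A × X)} {σ : Option A} {x y z : X}
    (h1 : WTr α σ x y) (h2 : WTr α none y z) : WTr α σ x z := by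
  cases σ with
  | none => exact Relation.ReflTransGen.trans h1 h2
  | some a =>
    obtain ⟨u, v, h1, h2', h3⟩ := h1
    exact ⟨u, v, h1, h2', Relation.ReflTransGen.trans h3 h2⟩

private lemma wtr_trans_tau {α : X → Set (Option A × X)} {σ : Option A} {x y z : X}
    (h1 : WTr α none x y) (h2 : WTr α σ y z) : WTr α σ x z := by
  cases σ with
  | none => exact Relation.ReflTransGen.trans h1 h2
  | some a =>
    obtain ⟨u, v, h1', h2', h3⟩ := h2
    exact ⟨u, v, Relation.ReflTransGen.trans h1 h1', h2', h3⟩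

end Aux

/-- The saturation `α*` of an LTS coalgebra is the least reflexive, transitive Kleisli
endomorphism above `α`, and it interacts with (op)lax homomorphisms `f♯`. -/
theorem lts_saturation_is_saturation {X A Y : Type*} (α : X → Set (Option A × X)) :
    leK (kunit X) (sat α) ∧
    leK α (sat α) ∧
    leK (kcomp (sat α) (sat α)) (sat α) ∧
    (∀ β : X → Set (Option A × X),
      leK (kunit X) β → leK α β → leK (kcomp β β) β → leK (sat α) β) ∧
    (∀ (f : X → Y) (β : Y → Set (Option A × Y)),
      (leK (kcomp (fsharp f) α) (kcomp β (fsharp f)) →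
        leK (kcomp (fsharp f) (sat α)) (kcomp (sat β) (fsharp f))) ∧
      (leK (kcomp β (fsharp f)) (kcomp (fsharp f) α) →
        leK (kcomp (sat β) (fsharp f)) (kcomp (fsharp f) (sat α)))) := by
  constructor
  · intro x p hp
    cases hp
    exact Relation.ReflTransGen.refl
  constructor
  · intro x p hp
    obtain ⟨σ, y⟩ := p
    cases σ with
    | none => exact Relation.ReflTransGen.single hp
    | some a => exact ⟨x, y, Relation.ReflTransGen.refl, hp, Relation.ReflTransGen.refl⟩
  constructor
  · rintro x ⟨σ, z⟩ ⟨y, hy⟩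
    rcases hy with ⟨h1, h2⟩ | ⟨h1, h2⟩
    · exact wtr_tau_trans h1 h2
    · exact wtr_trans_tau h1 h2
  constructor
  · intro β hrefl hα htrans
    have tau : ∀ x y : X, Relation.ReflTransGen (fun x y => ((none : Option A), y) ∈ α x) x y →
        ((none : Option A), y) ∈ β x := by
      intro x y h
      induction h with
      | refl => exact hrefl x rfl
      | tail _ hbc ih =>
        exact htrans x ⟨_, Or.inl ⟨ih, hα _ hbc⟩⟩
    rintro x ⟨σ, z⟩ hp
    cases σ with
    | none => exact tau x z hp
    | some a =>
      obtain ⟨u, v, h1, h2, h3⟩ := hp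
      have hb : (some a, v) ∈ β x := htrans x ⟨u, Or.inr ⟨tau x u h1, hα u h2⟩⟩
      exact htrans x ⟨v, Or.inl ⟨hb, tau v z h3⟩⟩
  · intro f β
    constructor
    · intro h
      have h' : ∀ x : X, ∀ σ : Option A, ∀ y : X, (σ, y) ∈ α x → (σ, f y) ∈ β (f x) := by
        intro x σ y hxy
        have hm : (σ, f y) ∈ kcomp (fsharp f) α x := ⟨y, Or.inl ⟨hxy, rfl⟩⟩
        have := h x hm
        rcases this with ⟨u, ⟨h1, h2⟩ | ⟨h1, h2⟩⟩
        · cases h1; exact h2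
        · cases h1; exact h2
      have tau : ∀ x y : X, Relation.ReflTransGen (fun x y => ((none : Option A), y) ∈ α x) x y →
          Relation.ReflTransGen (fun x y => ((none : Option A), y) ∈ β x) (f x) (f y) := by
        intro x y hxy
        induction hxy with
        | refl => exact Relation.ReflTransGen.refl
        | tail _ hbc ih => exact Relation.ReflTransGen.tail ih (h' _ _ _ hbc)
      rintro x ⟨σ, z⟩ ⟨y, hy⟩
      rcases hy with ⟨h1, h2⟩ | ⟨h1, h2⟩
      · -- (σ,y) ∈ sat α x, (none,z) ∈ fsharp f y, so σ = none and z = f y? No: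
        -- fsharp f y = {(none, f y)}, so h2 : (none, z) = (none, f y), z = f y
        cases h2
        refine ⟨f x, Or.inr ⟨rfl, ?_⟩⟩
        cases σ with
        | none => exact tau x y h1
        | some a =>
          obtain ⟨u, v, hu, hv, hw⟩ := h1
          exact ⟨f u, f v, tau x u hu, h' u _ v hv, tau v y hw⟩
      · cases h2
        exact ⟨f x, Or.inr ⟨rfl, tau x y h1⟩⟩
    · intro h
      have h' : ∀ x : X, ∀ σ : Option A, ∀ z : Y, (σ, z) ∈ β (f x) →
          ∃ y : X, (σ, y) ∈ α x ∧ z = f y := by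
        intro x σ z hz
        have hm : (σ, z) ∈ kcomp β (fsharp f) x := ⟨f x, Or.inr ⟨rfl, hz⟩⟩
        have := h x hm
        rcases this with ⟨u, ⟨h1, h2⟩ | ⟨h1, h2⟩⟩
        · cases h2; exact ⟨u, h1, rfl⟩
        · cases h2; exact ⟨u, h1, rfl⟩
      have tau : ∀ x : X, ∀ z : Y,
          Relation.ReflTransGen (fun x y => ((none : Option A), y) ∈ β x) (f x) z →
          ∃ y : X, Relation.ReflTransGen (fun x y => ((none : Option A), y) ∈ α x) x y ∧
            z = f y := by
        intro x z hz
        induction hz with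
        | refl => exact ⟨x, Relation.ReflTransGen.refl, rfl⟩
        | tail _ hbc ih =>
          obtain ⟨y, hy, rfl⟩ := ih
          obtain ⟨y', hy', rfl⟩ := h' y none _ hbc
          exact ⟨y', Relation.ReflTransGen.tail hy hy', rfl⟩
      rintro x ⟨σ, z⟩ ⟨u, hu⟩
      rcases hu with ⟨h1, h2⟩ | ⟨h1, h2⟩
      · -- h1 : (σ, u) ∈ fsharp f x, so σ = none, u = f x; h2 : (none, z) ∈ sat β u
        cases h1
        obtain ⟨y, hy, rfl⟩ := tau x z h2
        exact ⟨y, Or.inl ⟨hy, rfl⟩⟩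
      · cases h1
        cases σ with
        | none =>
          obtain ⟨y, hy, rfl⟩ := tau x z h2
          exact ⟨y, Or.inl ⟨hy, rfl⟩⟩
        | some a =>
          obtain ⟨u', v', hu', hv', hw'⟩ := h2
          obtain ⟨y1, hy1, rfl⟩ := tau x u' hu'
          obtain ⟨y2, hy2, rfl⟩ := h' y1 _ v' hv'
          obtain ⟨y3, hy3, rfl⟩ := tau y2 z hw'
          exact ⟨y3, Or.inl ⟨⟨y1, y2, hy1, hy2, hy3⟩, rfl⟩⟩
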